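/- Let q̂ ∈ [0,1] and define r_min(q̂) = −1 if q̂ ≤ 1/2 and r_min(q̂) = −1/2 − 1/(2q̂) + q̂ if 1/2 ≤ q̂ ≤ 1. Then r_min(q̂) equals min over x in the 2-simplex with 2q̂·x[1] − 1 ≤ 0 of (1 − q̂)·(−x[1]) + q̂·(−x[1] + x[2]). -/

import Mathlib

/-- Closed form for the best achievable loss over the comparator set
`O' = {x ∈ Δ([2]) : 2q̂ x₁ ≤ 1}` in Proposition 1:
the minimum of `(1 − q̂)(−x₁) + q̂(−x₁ + x₂)` is `−1` if `q̂ ≤ 1/2` and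
`−1/2 − 1/(2q̂) + q̂` otherwise. -/
theorem stmt_18 (q : ℝ) (hq : q ∈ Set.Icc (0 : ℝ) 1) :
    IsLeast
      {val : ℝ | ∃ x : ℝ × ℝ, 0 ≤ x.1 ∧ 0 ≤ x.2 ∧ x.1 + x.2 = 1 ∧
        2 * q * x.1 - 1 ≤ 0 ∧
        val = (1 - q) * (-x.1) + q * (-x.1 + x.2)}
      (if q ≤ 1 / 2 then -1 else -1 / 2 - 1 / (2 * q) + q) := by
  obtain ⟨hq0, hq1⟩ := hq
  by_cases h : q ≤ 1 / 2
  · rw [if_pos h]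
    constructor
    · exact ⟨(1, 0), by norm_num, by norm_num, by norm_num, by norm_num; linarith, by norm_num; ring⟩
    · rintro v ⟨⟨x1, x2⟩, hx1, hx2, hsum, _, hv⟩
      simp only at *
      nlinarith
  · rw [if_neg h]
    push_neg at h
    have hq0' : 0 < q := by linarith
    constructor
    · refine ⟨(1 / (2 * q), 1 - 1 / (2 * q)), by positivity, ?_, by ring, ?_, ?_⟩
      · rw [sub_nonneg, div_le_one (by linarith)]; linarith
      · field_simp; norm_num
      · field_simp; ring
    · rintro v ⟨⟨x1, x2⟩, hx1, hx2, hsum, hcon, hv⟩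
      simp only at *
      have hx1le : x1 ≤ 1 / (2 * q) := by
        rw [le_div_iff₀ (by linarith)]; linarith
      have key : (1 + q) * x1 ≤ (1 + q) * (1 / (2 * q)) := by
        apply mul_le_mul_of_nonneg_left hx1le (by linarith)
      have : v = q - (1 + q) * x1 := by rw [hv]; nlinarith [hsum]
      rw [this]
      have h2 : -1 / 2 - 1 / (2 * q) + q = q - (1 + q) * (1 / (2 * q)) := by
        field_simp; ring
      rw [h2]; linarith
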